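/- For every memory interval A and every branch B of T, the intersection A ∩ B is a (possibly empty) set of consecutive vertices along B, i.e., it induces a subpath of B. -/

import Mathlib

namespace VEB

inductive OTree : Type where
  | node : List OTree → OTree

def OTree.children : OTree → List OTree
  | .node cs => cs

mutual
  def height : OTree → ℕ
    | .node cs => 1 + heightList cs
  def heightList : List OTree → ℕ
    | [] => 0
    | c :: cs => max (height c) (heightList cs)
end

def subtreeAt? : OTree → List ℕ → Option OTree
  | t, [] => some t
  | t, i :: p =>
    match t.children[i]? with
    | some c => subtreeAt? c p
    | none => none

/-- `p` is (the path of) a vertex of `t`. -/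
def IsVertex (t : OTree) (p : List ℕ) : Prop := (subtreeAt? t p).isSome

/-- `p` is a leaf of `t`. -/
def IsLeaf (t : OTree) (p : List ℕ) : Prop := subtreeAt? t p = some (.node [])

/-- All leaves of `t` are at the same depth (the bottom level). -/
def Uniform (t : OTree) : Prop := ∀ p, IsLeaf t p → p.length + 1 = height t

/-- The top `m+1` levels of `t` (the truncation of height `m+1`). -/
def trunc : ℕ → OTree → OTree
  | 0, _ => .node []
  | m+1, t => .node (t.children.map (trunc m))

/-- Paths of the vertices at depth `m`, in left-to-right order. -/
def levelPaths : ℕ → OTree → List (List ℕ)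
  | 0, _ => [[]]
  | m+1, t => (t.children.zipIdx.map fun ic => (levelPaths m ic.1).map (ic.2 :: ·)).flatten

/-- The level at which a tree of height `h` is cut: `max ⌊ε h⌋ 1`. -/
noncomputable def cutLevel (ε : ℝ) (h : ℕ) : ℕ := max ⌊ε * (h : ℝ)⌋₊ 1

/-- The van Emde Boas order of the vertex paths of `t` (with recursion fuel). -/
noncomputable def vEBAux (ε : ℝ) : ℕ → OTree → List (List ℕ)
  | 0, _ => []
  | fuel+1, t =>
    if height t ≤ 1 then [[]]
    else
      let m := cutLevel ε (height t)
      vEBAux ε fuel (trunc (m - 1) t) ++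
        ((levelPaths m t).map fun q =>
          match subtreeAt? t q with
          | some s => (vEBAux ε fuel s).map (q ++ ·)
          | none => []).flatten

/-- The van Emde Boas order `vEB_ε(t)` of the vertex paths of `t`. -/
noncomputable def vEB (ε : ℝ) (t : OTree) : List (List ℕ) := vEBAux ε (height t) t

/-- Position (index) of vertex `p` in the van Emde Boas order. -/
noncomputable def pos (ε : ℝ) (t : OTree) (p : List ℕ) : ℕ := (vEB ε t).idxOf p

/-- `A` is a set of vertices occupying consecutive positions in `vEB_ε(t)`. -/
def MemInterval (ε : ℝ) (t : OTree) (A : Set (List ℕ)) : Prop :=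
  ∃ i n, A = {p | p ∈ ((vEB ε t).drop i).take n}

/-- The vertices of the decomposition `D` of `t`: pairs `(p, k)` of the root path
and the height of a decomposition subtree (with recursion fuel). -/
noncomputable def decompAux (ε : ℝ) : ℕ → OTree → List (List ℕ × ℕ)
  | 0, _ => []
  | fuel+1, t =>
    if height t ≤ 1 then [([], 1)]
    else
      let m := cutLevel ε (height t)
      ([], height t) ::
        (decompAux ε fuel (trunc (m - 1) t) ++
          ((levelPaths m t).map fun q =>
            match subtreeAt? t q with
            | some s => (decompAux ε fuel s).map fun r => (q ++ r.1, r.2)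
            | none => []).flatten)

/-- The vertices of the decomposition `D` of `t`. -/
noncomputable def decompVerts (ε : ℝ) (t : OTree) : List (List ℕ × ℕ) :=
  decompAux ε (height t) t

/-- The children in the decomposition tree `D` of the decomposition vertex `(p, k)`:
the top tree followed by the bottom trees in left-to-right order. -/
noncomputable def dChildren (ε : ℝ) (t : OTree) (p : List ℕ) (k : ℕ) : List (List ℕ × ℕ) :=
  if k ≤ 1 then []
  else
    match subtreeAt? t p with
    | some s =>
      (p, cutLevel ε k) ::
        (levelPaths (cutLevel ε k) s).map fun q => (p ++ q, k - cutLevel ε k)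
    | none => []

/-- The decomposition subtree `(p, k)` contains the vertex `w` of `t`;
equivalently, the leaf `{w}` of `D` lies in the subtree of `D` rooted at `(p, k)`. -/
def DContains (p : List ℕ) (k : ℕ) (w : List ℕ) : Prop :=
  p <+: w ∧ w.length < p.length + k

/-- Vertex `v` is to the left of the branch with leaf `ℓ`. -/
def LeftOfBranch (v ℓ : List ℕ) : Prop := List.Lex (· < ·) v (ℓ.take v.length)

/-- Vertex `v` is to the right of the branch with leaf `ℓ`. -/
def RightOfBranch (v ℓ : List ℕ) : Prop := List.Lex (· < ·) (ℓ.take v.length) v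

/-- Every internal vertex of `t` has at least `a` children. -/
def MinArity (t : OTree) (a : ℕ) : Prop :=
  ∀ p s, subtreeAt? t p = some s → s.children ≠ [] → a ≤ s.children.length

/-- Every internal vertex of `t` has at most `b` children. -/
def MaxArity (t : OTree) (b : ℕ) : Prop :=
  ∀ p s, subtreeAt? t p = some s → s.children.length ≤ b

/-- `w` lies on the leftmost branch descending from `v` (always taking the leftmost child). -/
def OnLeftmostBranch (v w : List ℕ) : Prop :=
  v <+: w ∧ ∀ n (hn : n < w.length), v.length ≤ n → w.get ⟨n, hn⟩ = 0

/-- `w` lies on the rightmost branch descending from `v` (always taking the rightmost child). -/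
def OnRightmostBranch (t : OTree) (v w : List ℕ) : Prop :=
  v <+: w ∧ ∀ n (hn : n < w.length), v.length ≤ n →
    ∀ s, subtreeAt? t (w.take n) = some s → w.get ⟨n, hn⟩ + 1 = s.children.length


/-! ### Auxiliary lemmas -/

lemma one_le_height (t : OTree) : 1 ≤ height t := by
  cases t with
  | node cs => rw [height]; omega

lemma heightList_le_iff {cs : List OTree} {n : ℕ} :
    heightList cs ≤ n ↔ ∀ c ∈ cs, height c ≤ n := by
  induction cs with
  | nil => simp [heightList]
  | cons c cs ih => rw [heightList]; simp [max_le_iff, ih]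

lemma children_eq_nil_of_height_le_one {t : OTree} (h : height t ≤ 1) : t = .node [] := by
  cases t with
  | node cs =>
    rw [height] at h
    cases cs with
    | nil => rfl
    | cons c cs' =>
      have h2 : height c ≤ heightList (c :: cs') := by
        rw [heightList]; exact le_max_left _ _
      have := one_le_height c
      omega

lemma isVertex_node_nil {p : List ℕ} : IsVertex (.node []) p ↔ p = [] := by
  cases p with
  | nil => simp [IsVertex, subtreeAt?]
  | cons i p => simp [IsVertex, subtreeAt?, OTree.children]

lemma subtreeAt?_append (t : OTree) (q r : List ℕ) :
    subtreeAt? t (q ++ r) = (subtreeAt? t q).bind (fun s => subtreeAt? s r) := by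
  induction q generalizing t with
  | nil => simp [subtreeAt?]
  | cons i q ih =>
    rw [List.cons_append, subtreeAt?, subtreeAt?]
    cases h : t.children[i]? with
    | none => simp
    | some c => simp [ih]

lemma isVertex_prefix {t : OTree} {p : List ℕ} (h : IsVertex t p) (n : ℕ) :
    IsVertex t (p.take n) := by
  rw [IsVertex] at *
  have hsp := subtreeAt?_append t (p.take n) (p.drop n)
  rw [List.take_append_drop] at hsp
  cases hq : subtreeAt? t (p.take n) with
  | some s => simp
  | none => rw [hsp, hq] at h; simp at h

lemma height_le_of_mem {c : OTree} {cs : List OTree} (h : c ∈ cs) :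
    height c ≤ heightList cs :=
  heightList_le_iff.mp le_rfl c h

lemma height_subtreeAt? : ∀ (q : List ℕ) (t s : OTree), subtreeAt? t q = some s →
    height s + q.length ≤ height t := by
  intro q
  induction q with
  | nil =>
    intro t s h
    rw [subtreeAt?] at h
    cases h
    simp
  | cons i q ih =>
    intro t s h
    rw [subtreeAt?] at h
    cases hc : t.children[i]? with
    | none => rw [hc] at h; simp at h
    | some c =>
      rw [hc] at h
      have h1 := ih c s h
      have h2 : height c ≤ heightList t.children :=
        height_le_of_mem (List.mem_of_getElem? hc)
      cases t with
      | node cs =>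
        rw [height]
        rw [OTree.children] at h2
        simp only [List.length_cons]
        omega

lemma subtreeAt?_trunc : ∀ (p : List ℕ) (k : ℕ) (t : OTree), p.length ≤ k →
    subtreeAt? (trunc k t) p = (subtreeAt? t p).map (trunc (k - p.length)) := by
  intro p
  induction p with
  | nil => intro k t _; simp [subtreeAt?]
  | cons i p ih =>
    intro k t hk
    cases k with
    | zero => simp at hk
    | succ k =>
      cases t with
      | node cs =>
        rw [trunc, subtreeAt?, subtreeAt?]
        simp only [OTree.children, List.getElem?_map]
        cases hc : cs[i]? with
        | none => simp
        | some c =>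
          simp only [Option.map_some]
          rw [ih k c (by simpa using hk)]
          simp [Nat.succ_sub_succ]

lemma length_le_of_isVertex_trunc : ∀ (p : List ℕ) (k : ℕ) (t : OTree),
    IsVertex (trunc k t) p → p.length ≤ k := by
  intro p
  induction p with
  | nil => intro k t _; simp
  | cons i p ih =>
    intro k t h
    cases k with
    | zero =>
      cases t
      rw [trunc, isVertex_node_nil] at h
      simp at h
    | succ k =>
      cases t with
      | node cs =>
        rw [IsVertex, trunc, subtreeAt?] at h
        simp only [OTree.children, List.getElem?_map] at h
        cases hc : cs[i]? with
        | none => rw [hc] at h; simp at h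
        | some c =>
          rw [hc] at h
          simp only [Option.map_some] at h
          have := ih k c h
          simp only [List.length_cons]
          omega

lemma isVertex_trunc_iff {k : ℕ} {t : OTree} {p : List ℕ} :
    IsVertex (trunc k t) p ↔ IsVertex t p ∧ p.length ≤ k := by
  constructor
  · intro h
    have hl := length_le_of_isVertex_trunc p k t h
    refine ⟨?_, hl⟩
    rw [IsVertex, subtreeAt?_trunc p k t hl] at h
    rw [IsVertex]
    cases hq : subtreeAt? t p with
    | none => rw [hq] at h; simp at h
    | some s => simp
  · rintro ⟨h, hl⟩
    rw [IsVertex, subtreeAt?_trunc p k t hl]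
    rw [IsVertex] at h
    cases hq : subtreeAt? t p with
    | none => rw [hq] at h; simp at h
    | some s => simp

lemma height_trunc_le : ∀ (k : ℕ) (t : OTree), height (trunc k t) ≤ k + 1 := by
  intro k
  induction k with
  | zero => intro t; rw [trunc, height, heightList]
  | succ k ih =>
    intro t
    cases t with
    | node cs =>
      rw [trunc, height]
      simp only [OTree.children]
      have : heightList (cs.map (trunc k)) ≤ k + 1 := by
        rw [heightList_le_iff]
        intro c hc
        rw [List.mem_map] at hc
        obtain ⟨c', _, rfl⟩ := hc
        exact ih c'
      omega

lemma mem_levelPaths : ∀ (m : ℕ) (t : OTree) (q : List ℕ),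
    q ∈ levelPaths m t ↔ IsVertex t q ∧ q.length = m := by
  intro m
  induction m with
  | zero =>
    intro t q
    rw [levelPaths]
    cases q with
    | nil => simp [IsVertex, subtreeAt?]
    | cons i q => simp
  | succ m ih =>
    intro t q
    cases t with
    | node cs =>
      rw [levelPaths, List.mem_flatten]
      constructor
      · rintro ⟨l, hl, hq⟩
        rw [List.mem_map] at hl
        obtain ⟨⟨c, i⟩, hic, rfl⟩ := hl
        rw [List.mem_zipIdx_iff_getElem?] at hic
        rw [List.mem_map] at hq
        obtain ⟨q', hq', rfl⟩ := hq
        rw [ih] at hq'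
        refine ⟨?_, by simp [hq'.2]⟩
        rw [IsVertex, subtreeAt?]
        simp only [OTree.children] at hic ⊢
        rw [hic]
        exact hq'.1
      · rintro ⟨hv, hlen⟩
        cases q with
        | nil => simp at hlen
        | cons i q' =>
          rw [IsVertex, subtreeAt?] at hv
          simp only [OTree.children] at hv
          cases hc : cs[i]? with
          | none => rw [hc] at hv; simp at hv
          | some c =>
            rw [hc] at hv
            refine ⟨(levelPaths m c).map (i :: ·), ?_, ?_⟩
            · rw [List.mem_map]
              exact ⟨(c, i), List.mem_zipIdx_iff_getElem?.2 hc, rfl⟩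
            · rw [List.mem_map]
              exact ⟨q', (ih c q').2 ⟨hv, by simpa using hlen⟩, rfl⟩

lemma nodup_levelPaths : ∀ (m : ℕ) (t : OTree), (levelPaths m t).Nodup := by
  intro m
  induction m with
  | zero => intro t; rw [levelPaths]; simp
  | succ m ih =>
    intro t
    rw [levelPaths, List.nodup_flatten]
    constructor
    · intro l hl
      rw [List.mem_map] at hl
      obtain ⟨⟨c, i⟩, _, rfl⟩ := hl
      exact (ih c).map (fun a b h => by injection h)
    · rw [List.pairwise_map]
      have h1 : (List.map Prod.snd t.children.zipIdx).Nodup := by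
        rw [List.zipIdx_map_snd]; exact List.nodup_range'
      have h2 : t.children.zipIdx.Pairwise (fun a b => a.2 ≠ b.2) :=
        List.pairwise_map.mp h1
      refine h2.imp ?_
      intro a b hab x hx hx'
      rw [List.mem_map] at hx hx'
      obtain ⟨q, _, rfl⟩ := hx
      obtain ⟨q', _, h⟩ := hx'
      exact hab (by injection h.symm)

lemma cutLevel_pos (ε : ℝ) (h : ℕ) : 1 ≤ cutLevel ε h := le_max_right _ _

lemma cutLevel_lt (ε : ℝ) (hε1 : ε ≤ 1/2) {h : ℕ} (hh : 2 ≤ h) : cutLevel ε h < h := by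
  rw [cutLevel]
  have h1 : ⌊ε * (h : ℝ)⌋₊ ≤ ⌊(h : ℝ) / 2⌋₊ := by
    apply Nat.floor_le_floor
    calc ε * (h : ℝ) ≤ (1/2) * (h : ℝ) :=
          mul_le_mul_of_nonneg_right hε1 (by positivity)
      _ = (h : ℝ) / 2 := by ring
  have h2 : ⌊(h : ℝ) / 2⌋₊ = h / 2 := by
    rw [show ((2 : ℝ)) = ((2 : ℕ) : ℝ) by norm_num, Nat.floor_div_natCast, Nat.floor_natCast]
  rw [h2] at h1
  omega

/-- The bottom part of the vEB recursion. -/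
noncomputable def bottomOf (ε : ℝ) (fuel : ℕ) (t : OTree) : List (List ℕ) :=
  ((levelPaths (cutLevel ε (height t)) t).map fun q =>
    match subtreeAt? t q with
    | some s => (vEBAux ε fuel s).map (q ++ ·)
    | none => []).flatten

lemma vEBAux_succ_eq {ε : ℝ} {fuel : ℕ} {t : OTree} (h1 : ¬ height t ≤ 1) :
    vEBAux ε (fuel + 1) t =
      vEBAux ε fuel (trunc (cutLevel ε (height t) - 1) t) ++ bottomOf ε fuel t := by
  rw [vEBAux, if_neg h1, bottomOf]

lemma bottomOf_shape {ε : ℝ} {fuel : ℕ} {t : OTree} {p : List ℕ}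
    (h : p ∈ bottomOf ε fuel t) :
    ∃ q s r, q ∈ levelPaths (cutLevel ε (height t)) t ∧ subtreeAt? t q = some s ∧
      r ∈ vEBAux ε fuel s ∧ p = q ++ r := by
  rw [bottomOf, List.mem_flatten] at h
  obtain ⟨l, hl, hp⟩ := h
  rw [List.mem_map] at hl
  obtain ⟨q, hq, rfl⟩ := hl
  cases hs : subtreeAt? t q with
  | none => rw [hs] at hp; simp at hp
  | some s =>
    rw [hs] at hp
    rw [List.mem_map] at hp
    obtain ⟨r, hr, rfl⟩ := hp
    exact ⟨q, s, r, hq, hs, hr, rfl⟩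

lemma bottomOf_intro {ε : ℝ} {fuel : ℕ} {t : OTree} {q r : List ℕ} {s : OTree}
    (hq : q ∈ levelPaths (cutLevel ε (height t)) t) (hs : subtreeAt? t q = some s)
    (hr : r ∈ vEBAux ε fuel s) :
    q ++ r ∈ bottomOf ε fuel t := by
  rw [bottomOf, List.mem_flatten]
  refine ⟨(vEBAux ε fuel s).map (q ++ ·), ?_, List.mem_map.2 ⟨r, hr, rfl⟩⟩
  rw [List.mem_map]
  refine ⟨q, hq, ?_⟩
  rw [hs]

lemma sublist_bottomOf {ε : ℝ} {fuel : ℕ} {t : OTree} {q : List ℕ} {s : OTree}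
    {l : List (List ℕ)}
    (hq : q ∈ levelPaths (cutLevel ε (height t)) t) (hs : subtreeAt? t q = some s)
    (hl : l.Sublist ((vEBAux ε fuel s).map (q ++ ·))) :
    l.Sublist (bottomOf ε fuel t) := by
  apply hl.trans
  apply List.sublist_flatten_of_mem
  rw [List.mem_map]
  refine ⟨q, hq, ?_⟩
  rw [hs]

lemma mem_vEBAux {ε : ℝ} (hε1 : ε ≤ 1/2) :
    ∀ (fuel : ℕ) (t : OTree), height t ≤ fuel →
      ∀ p, p ∈ vEBAux ε fuel t ↔ IsVertex t p := by
  intro fuel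
  induction fuel with
  | zero => intro t ht; have := one_le_height t; omega
  | succ fuel ih =>
    intro t ht p
    by_cases h1 : height t ≤ 1
    · rw [vEBAux, if_pos h1]
      have h0 := children_eq_nil_of_height_le_one h1
      subst h0
      rw [isVertex_node_nil]
      simp
    · have hh2 : 2 ≤ height t := by have := one_le_height t; omega
      have hm1 := cutLevel_pos ε (height t)
      have hmlt := cutLevel_lt ε hε1 hh2
      rw [vEBAux_succ_eq h1, List.mem_append]
      have hfuel_top : height (trunc (cutLevel ε (height t) - 1) t) ≤ fuel :=
        le_trans (height_trunc_le _ _) (by omega)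
      rw [ih _ hfuel_top, isVertex_trunc_iff]
      constructor
      · rintro (⟨hv, _⟩ | hb)
        · exact hv
        · obtain ⟨q, s, r, hq, hs, hr, rfl⟩ := bottomOf_shape hb
          rw [mem_levelPaths] at hq
          have hsh : height s ≤ fuel := by
            have := height_subtreeAt? q t s hs
            omega
          rw [ih s hsh] at hr
          rw [IsVertex, subtreeAt?_append, hs]
          exact hr
      · intro hv
        by_cases hl : p.length ≤ cutLevel ε (height t) - 1
        · exact Or.inl ⟨hv, hl⟩
        · right
          set m := cutLevel ε (height t) with hm
          have hml : m ≤ p.length := by omega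
          have hq : p.take m ∈ levelPaths m t := by
            rw [mem_levelPaths]
            exact ⟨isVertex_prefix hv m, by simp [hml]⟩
          have hsplit := subtreeAt?_append t (p.take m) (p.drop m)
          rw [List.take_append_drop] at hsplit
          rw [IsVertex] at hv
          cases hs : subtreeAt? t (p.take m) with
          | none => rw [hsplit, hs] at hv; simp at hv
          | some s =>
            rw [hsplit, hs] at hv
            simp only [Option.bind_some] at hv
            have hsh : height s ≤ fuel := by
              have h5 := height_subtreeAt? (p.take m) t s hs
              have h6 : (p.take m).length = m := by simp [hml]
              omega
            have : p.drop m ∈ vEBAux ε fuel s := by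
              rw [ih s hsh]
              exact hv
            have := bottomOf_intro hq hs this
            rwa [List.take_append_drop] at this

lemma nodup_vEBAux {ε : ℝ} (hε1 : ε ≤ 1/2) :
    ∀ (fuel : ℕ) (t : OTree), height t ≤ fuel → (vEBAux ε fuel t).Nodup := by
  intro fuel
  induction fuel with
  | zero => intro t ht; have := one_le_height t; omega
  | succ fuel ih =>
    intro t ht
    by_cases h1 : height t ≤ 1
    · rw [vEBAux, if_pos h1]; simp
    · have hh2 : 2 ≤ height t := by have := one_le_height t; omega
      have hm1 := cutLevel_pos ε (height t)
      have hmlt := cutLevel_lt ε hε1 hh2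
      set m := cutLevel ε (height t) with hm
      rw [vEBAux_succ_eq h1, List.nodup_append]
      have hfuel_top : height (trunc (m - 1) t) ≤ fuel :=
        le_trans (height_trunc_le _ _) (by omega)
      have key : ∀ q ∈ levelPaths m t, ∀ x,
          (x ∈ (match subtreeAt? t q with
            | some s => (vEBAux ε fuel s).map (q ++ ·)
            | none => ([] : List (List ℕ)))) → x.take m = q ∧ m ≤ x.length := by
        intro q hq x hx
        cases hs : subtreeAt? t q with
        | none => rw [hs] at hx; simp at hx
        | some s =>
          rw [hs] at hx
          rw [List.mem_map] at hx
          obtain ⟨r, _, rfl⟩ := hx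
          have hql : q.length = m := ((mem_levelPaths m t q).1 hq).2
          constructor
          · rw [← hql]; exact List.take_left
          · simp; omega
      refine ⟨ih _ hfuel_top, ?_, ?_⟩
      · rw [bottomOf, List.nodup_flatten]
        constructor
        · intro l hl
          rw [List.mem_map] at hl
          obtain ⟨q, hq, rfl⟩ := hl
          cases hs : subtreeAt? t q with
          | none => exact List.nodup_nil
          | some s =>
            rw [mem_levelPaths] at hq
            have hsh : height s ≤ fuel := by
              have := height_subtreeAt? q t s hs
              omega
            exact (ih s hsh).map (List.append_right_injective q)
        · rw [List.pairwise_map]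
          refine List.Pairwise.imp_of_mem ?_ (nodup_levelPaths m t)
          intro q q' hq hq' hne x hx hx'
          exact hne (((key q hq x hx).1.symm).trans (key q' hq' x hx').1)
      · intro x hx x' hx' hxx
        subst hxx
        have hxlen : x.length ≤ m - 1 :=
          (isVertex_trunc_iff.1 ((mem_vEBAux hε1 fuel _ hfuel_top x).1 hx)).2
        rw [bottomOf, List.mem_flatten] at hx'
        obtain ⟨l, hl, hxl⟩ := hx'
        rw [List.mem_map] at hl
        obtain ⟨q, hq, rfl⟩ := hl
        have := (key q hq x hxl).2
        omega

lemma order_vEBAux {ε : ℝ} (hε1 : ε ≤ 1/2) :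
    ∀ (fuel : ℕ) (t : OTree), height t ≤ fuel →
      ∀ p p', IsVertex t p → IsVertex t p' → p <+: p' → p ≠ p' →
        [p, p'].Sublist (vEBAux ε fuel t) := by
  intro fuel
  induction fuel with
  | zero => intro t ht; have := one_le_height t; omega
  | succ fuel ih =>
    intro t ht p p' hp hp' hpre hne
    have hlen : p.length < p'.length := by
      obtain ⟨r, rfl⟩ := hpre
      cases r with
      | nil => simp at hne
      | cons a r => simp
    by_cases h1 : height t ≤ 1
    · have h0 := children_eq_nil_of_height_le_one h1
      subst h0
      rw [isVertex_node_nil] at hp hp'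
      subst hp; subst hp'
      simp at hlen
    · have hh2 : 2 ≤ height t := by have := one_le_height t; omega
      have hm1 := cutLevel_pos ε (height t)
      have hmlt := cutLevel_lt ε hε1 hh2
      set m := cutLevel ε (height t) with hm
      rw [vEBAux_succ_eq h1]
      have hfuel_top : height (trunc (m - 1) t) ≤ fuel :=
        le_trans (height_trunc_le _ _) (by omega)
      by_cases hc1 : p'.length ≤ m - 1
      · have := ih _ hfuel_top p p'
          (isVertex_trunc_iff.2 ⟨hp, by omega⟩)
          (isVertex_trunc_iff.2 ⟨hp', hc1⟩) hpre hne
        exact this.trans (List.sublist_append_left _ _)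
      · by_cases hc2 : p.length ≤ m - 1
        · have htp : [p].Sublist (vEBAux ε fuel (trunc (m - 1) t)) :=
            List.singleton_sublist.2
              ((mem_vEBAux hε1 fuel _ hfuel_top p).2 (isVertex_trunc_iff.2 ⟨hp, hc2⟩))
          have hbp : [p'].Sublist (bottomOf ε fuel t) := by
            apply List.singleton_sublist.2
            have hml : m ≤ p'.length := by omega
            have hq : p'.take m ∈ levelPaths m t := by
              rw [mem_levelPaths]
              exact ⟨isVertex_prefix hp' m, by simp [hml]⟩
            have hsplit := subtreeAt?_append t (p'.take m) (p'.drop m)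
            rw [List.take_append_drop] at hsplit
            rw [IsVertex] at hp'
            cases hs : subtreeAt? t (p'.take m) with
            | none => rw [hsplit, hs] at hp'; simp at hp'
            | some s =>
              rw [hsplit, hs] at hp'
              simp only [Option.bind_some] at hp'
              have hsh : height s ≤ fuel := by
                have h5 := height_subtreeAt? (p'.take m) t s hs
                have h6 : (p'.take m).length = m := by simp [hml]
                omega
              have hr : p'.drop m ∈ vEBAux ε fuel s := by
                rw [mem_vEBAux hε1 fuel s hsh]
                exact hp'
              have := bottomOf_intro hq hs hr
              rwa [List.take_append_drop] at this
          exact htp.append hbp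
        · -- both in the bottom, same subtree
          have hml : m ≤ p.length := by omega
          obtain ⟨w, rfl⟩ := hpre
          have htake : (p ++ w).take m = p.take m := by
            rw [List.take_append]
            have : m - p.length = 0 := by omega
            rw [this]
            simp
          have hq : p.take m ∈ levelPaths m t := by
            rw [mem_levelPaths]
            exact ⟨isVertex_prefix hp m, by simp [hml]⟩
          have hsplit := subtreeAt?_append t (p.take m) (p.drop m)
          rw [List.take_append_drop] at hsplit
          have hsplit' := subtreeAt?_append t ((p ++ w).take m) ((p ++ w).drop m)
          rw [List.take_append_drop] at hsplit'
          rw [IsVertex] at hp hp'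
          cases hs : subtreeAt? t (p.take m) with
          | none => rw [hsplit, hs] at hp; simp at hp
          | some s =>
            rw [hsplit, hs] at hp
            simp only [Option.bind_some] at hp
            rw [hsplit', htake, hs] at hp'
            simp only [Option.bind_some] at hp'
            have hsh : height s ≤ fuel := by
              have h5 := height_subtreeAt? (p.take m) t s hs
              have h6 : (p.take m).length = m := by simp [hml]
              omega
            have hdroppre : p.drop m <+: (p ++ w).drop m := by
              rw [List.drop_append]
              have : m - p.length = 0 := by omega
              rw [this]
              simp
            have hw : 0 < w.length := by
              cases w with
              | nil => simp at hne
              | cons a w => simp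
            have hdropne : p.drop m ≠ (p ++ w).drop m := by
              intro hcon
              have hlc := congrArg List.length hcon
              rw [List.length_drop, List.length_drop, List.length_append] at hlc
              omega
            have hsmall := ih s hsh (p.drop m) ((p ++ w).drop m) hp hp' hdroppre hdropne
            have hmap : [p.take m ++ p.drop m, p.take m ++ (p ++ w).drop m].Sublist
                ((vEBAux ε fuel s).map (p.take m ++ ·)) := by
              have := hsmall.map (p.take m ++ ·)
              simpa using this
            rw [List.take_append_drop] at hmap
            have hPW : p.take m ++ (p ++ w).drop m = p ++ w := by
              conv_rhs => rw [← List.take_append_drop m (p ++ w)]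
              rw [htake]
            rw [hPW] at hmap
            have := sublist_bottomOf hq hs hmap
            exact this.trans (List.sublist_append_right _ _)

lemma indexOf_lt_of_pair_sublist {α : Type*} [DecidableEq α] {a b : α} :
    ∀ {L : List α}, L.Nodup → [a, b].Sublist L → L.idxOf a < L.idxOf b := by
  intro L
  induction L with
  | nil => intro _ h; simp at h
  | cons c L ih =>
    intro hnd hsub
    rw [List.nodup_cons] at hnd
    cases hsub with
    | cons _ h =>
      have ha : a ∈ L := h.subset (by simp)
      have hb : b ∈ L := h.subset (by simp)
      have hac : a ≠ c := fun hh => hnd.1 (hh ▸ ha)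
      have hbc : b ≠ c := fun hh => hnd.1 (hh ▸ hb)
      rw [List.idxOf_cons, List.idxOf_cons]
      have e1 : (c == a) = false := by simp [hac.symm]
      have e2 : (c == b) = false := by simp [hbc.symm]
      rw [e1, e2]
      simp only [cond_false]
      have := ih hnd.2 h
      omega
    | cons_cons _ h =>
      -- here a = c and [b] <+ L
      have hb : b ∈ L := h.subset (by simp)
      have hba : b ≠ a := fun hh => hnd.1 (hh ▸ hb)
      rw [List.idxOf_cons, List.idxOf_cons]
      have e1 : (a == a) = true := by simp
      have e2 : (a == b) = false := by simp [hba.symm]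
      rw [e1, e2]
      simp

lemma mem_take_drop_iff {α : Type*} [DecidableEq α] {L : List α} (hnd : L.Nodup)
    {i n : ℕ} {p : α} :
    p ∈ (L.drop i).take n ↔ p ∈ L ∧ i ≤ L.idxOf p ∧ L.idxOf p < i + n := by
  constructor
  · intro hp
    rw [List.mem_iff_getElem] at hp
    obtain ⟨j, hj, hpj⟩ := hp
    have hjn : j < n := by
      have := hj
      rw [List.length_take] at this
      omega
    have hjL : i + j < L.length := by
      have := hj
      rw [List.length_take, List.length_drop] at this
      omega
    have hLij : L[i + j]'hjL = p := by
      rw [← hpj]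
      rw [List.getElem_take, List.getElem_drop]
    have hpL : p ∈ L := by
      rw [List.mem_iff_getElem]
      exact ⟨i + j, hjL, hLij⟩
    have hidx : L.idxOf p < L.length := List.idxOf_lt_length_iff.2 hpL
    have : L[L.idxOf p]'hidx = L[i + j]'hjL := by
      rw [List.getElem_idxOf, hLij]
    have heq : L.idxOf p = i + j := by
      exact (List.Nodup.getElem_inj_iff hnd).1 this
    exact ⟨hpL, by omega, by omega⟩
  · rintro ⟨hpL, hi, hn⟩
    have hidx : L.idxOf p < L.length := List.idxOf_lt_length_iff.2 hpL
    rw [List.mem_iff_getElem]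
    have hj : L.idxOf p - i < ((L.drop i).take n).length := by
      rw [List.length_take, List.length_drop]
      omega
    refine ⟨L.idxOf p - i, hj, ?_⟩
    rw [List.getElem_take, List.getElem_drop]
    have : i + (L.idxOf p - i) = L.idxOf p := by omega
    simp only [this]
    exact List.getElem_idxOf hidx

/-- For every memory interval `A` and every branch `B` (given by its
leaf `ℓ`), the intersection `A ∩ B` induces a (possibly empty) subpath of the branch. -/
theorem memInterval_inter_branch_subpath
    (ε : ℝ) (hε0 : 0 < ε) (hε1 : ε ≤ 1/2) (t : OTree) (ht : Uniform t)
    (A : Set (List ℕ)) (hA : MemInterval ε t A)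
    (ℓ : List ℕ) (hℓ : IsLeaf t ℓ)
    (n₁ n₂ n₃ : ℕ) (h12 : n₁ ≤ n₂) (h23 : n₂ ≤ n₃)
    (h1 : ℓ.take n₁ ∈ A) (h3 : ℓ.take n₃ ∈ A) :
    ℓ.take n₂ ∈ A := by
  obtain ⟨i, n, rfl⟩ := hA
  have hnd : (vEB ε t).Nodup := nodup_vEBAux hε1 (height t) t le_rfl
  have hℓv : IsVertex t ℓ := by rw [IsVertex, hℓ]; rfl
  have hv : ∀ k, IsVertex t (ℓ.take k) := fun k => isVertex_prefix hℓv k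
  have hmem : ∀ k, ℓ.take k ∈ vEB ε t := fun k =>
    (mem_vEBAux hε1 (height t) t le_rfl _).2 (hv k)
  have hmono : ∀ a b : ℕ, a ≤ b →
      @List.idxOf (List ℕ) instBEqOfDecidableEq (ℓ.take a) (vEB ε t) ≤
        @List.idxOf (List ℕ) instBEqOfDecidableEq (ℓ.take b) (vEB ε t) := by
    intro a b hab
    by_cases he : ℓ.take a = ℓ.take b
    · rw [he]
    · have hpre : ℓ.take a <+: ℓ.take b := by
        have h0 : (ℓ.take b).take a = ℓ.take a := by
          rw [List.take_take, min_eq_left hab]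
        rw [← h0]
        exact List.take_prefix _ _
      have hs := order_vEBAux hε1 (height t) t le_rfl _ _ (hv a) (hv b) hpre he
      exact (indexOf_lt_of_pair_sublist hnd hs).le
  simp only [Set.mem_setOf_eq] at h1 h3 ⊢
  rw [mem_take_drop_iff hnd] at h1 h3 ⊢
  obtain ⟨-, h1a, h1b⟩ := h1
  obtain ⟨-, h3a, h3b⟩ := h3
  have m12 := hmono n₁ n₂ h12
  have m23 := hmono n₂ n₃ h23
  exact ⟨hmem n₂, by omega, by omega⟩

end VEB
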